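/- Let S be a compact, Hausdorff, totally disconnected topological space and let φ : F ⟶ G be a morphism of sheaves of abelian groups on S that is surjective on every stalk. Then the induced homomorphism F(S) → G(S) on global sections is surjective. (Consequently, the global sections functor on sheaves of abelian groups on S is exact.) -/

import Mathlib

open TopologicalSpace Opposite CategoryTheory

section Aux

variable {S : Type} [TopologicalSpace S]

/-- Sections of a sheaf over an open set equal to `⊥` are subsingleton. -/
lemma aux_sections_subsingleton (F : TopCat.Sheaf AddCommGrpCat.{0} (TopCat.of S))
    {W : Opens (TopCat.of S)} (hW : W = ⊥) (a b : F.val.obj (op W)) : a = b := by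
  have hZ : Limits.IsZero (F.val.obj (op W)) :=
    (TopCat.Sheaf.isTerminalOfEqEmpty F hW).isZero
  have h1 : (𝟙 (F.val.obj (op W)) : F.val.obj (op W) ⟶ _) = 0 := hZ.eq_of_src _ _
  calc a = (𝟙 (F.val.obj (op W)) : F.val.obj (op W) ⟶ _) a := rfl
    _ = (0 : F.val.obj (op W) ⟶ F.val.obj (op W)) a := by rw [h1]
    _ = (𝟙 (F.val.obj (op W)) : F.val.obj (op W) ⟶ _) b := by rw [h1]; rfl
    _ = b := rfl

/-- The restriction of a lift is a lift. -/
lemma aux_restrict_lift {F G : TopCat.Sheaf AddCommGrpCat.{0} (TopCat.of S)} (φ : F ⟶ G)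
    (t : G.val.obj (op (⊤ : Opens (TopCat.of S)))) {U V : Opens (TopCat.of S)} (h : V ≤ U)
    (hU : ∃ s, φ.hom.app (op U) s = G.val.map (homOfLE le_top).op t) :
    ∃ s, φ.hom.app (op V) s = G.val.map (homOfLE le_top).op t := by
  obtain ⟨s, hs⟩ := hU
  refine ⟨F.val.map (homOfLE h).op s, ?_⟩
  rw [← comp_apply, φ.hom.naturality, comp_apply, hs, ← comp_apply, ← G.val.map_comp]
  congr 1

/-- Gluing lifts over two disjoint open sets. -/
lemma aux_glue2 {F G : TopCat.Sheaf AddCommGrpCat.{0} (TopCat.of S)} (φ : F ⟶ G)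
    (t : G.val.obj (op (⊤ : Opens (TopCat.of S)))) (U V : Opens (TopCat.of S))
    (hdisj : U ⊓ V = ⊥)
    (hU : ∃ s, φ.hom.app (op U) s = G.val.map (homOfLE le_top).op t)
    (hV : ∃ s, φ.hom.app (op V) s = G.val.map (homOfLE le_top).op t) :
    ∃ s, φ.hom.app (op (U ⊔ V)) s = G.val.map (homOfLE le_top).op t := by
  obtain ⟨sU, hsU⟩ := hU
  obtain ⟨sV, hsV⟩ := hV
  let W : Bool → Opens (TopCat.of S) := fun b => if b then U else V
  let sf : ∀ b, F.val.obj (op (W b)) :=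
    fun b => Bool.rec (motive := fun b => F.val.obj (op (W b))) sV sU b
  have hsf : ∀ b, φ.hom.app (op (W b)) (sf b) = G.val.map (homOfLE le_top).op t := by
    intro b; cases b
    · exact hsV
    · exact hsU
  have hcover : U ⊔ V ≤ iSup W := sup_le (le_iSup W true) (le_iSup W false)
  have iUV : ∀ b, W b ⟶ U ⊔ V := fun b => homOfLE (by cases b <;> simp [W])
  have hcompat : TopCat.Presheaf.IsCompatible F.val W sf := by
    intro i j
    by_cases hij : i = j
    · subst hij
      congr 1
    · apply aux_sections_subsingleton
      cases i <;> cases j <;> simp_all [W]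
      · rw [inf_comm] at hdisj; exact hdisj
  obtain ⟨s, hs, -⟩ := TopCat.Sheaf.existsUnique_gluing' (C := AddCommGrpCat.{0}) F W (U ⊔ V) iUV
    hcover sf hcompat
  refine ⟨s, ?_⟩
  apply TopCat.Sheaf.eq_of_locally_eq' (C := AddCommGrpCat.{0}) G W (U ⊔ V) iUV hcover
  intro b
  rw [← comp_apply, ← φ.hom.naturality, comp_apply, hs b, hsf b,
    ← comp_apply, ← G.val.map_comp]
  congr 1

end Aux

/-- On a profinite (compact Hausdorff totally disconnected) space, a morphism of sheaves of
abelian groups that is surjective on all stalks is surjective on global sections; hence the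
global sections functor is exact. -/
theorem stmt_5 {S : Type} [TopologicalSpace S] [CompactSpace S] [T2Space S]
    [TotallyDisconnectedSpace S]
    {F G : TopCat.Sheaf AddCommGrpCat (TopCat.of S)} (φ : F ⟶ G)
    (hsurj : ∀ s : TopCat.of S,
      Function.Surjective ((TopCat.Presheaf.stalkFunctor AddCommGrpCat s).map φ.hom)) :
    Function.Surjective (φ.hom.app (op (⊤ : Opens (TopCat.of S)))) := by
  classical
  intro t
  -- Step 1: local lifts on clopen neighborhoods
  have loc : ∀ x : S, ∃ V : Opens (TopCat.of S), IsClopen V.1 ∧ x ∈ V ∧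
      ∃ s, φ.hom.app (op V) s = G.val.map (homOfLE le_top).op t := by
    intro x
    obtain ⟨s₀, hs₀⟩ := hsurj x (G.presheaf.germ ⊤ x (Opens.mem_top x) t)
    obtain ⟨V₁, hxV₁, s₁, rfl⟩ := F.presheaf.germ_exist (x := x) s₀
    rw [TopCat.Presheaf.stalkFunctor_map_germ_apply V₁ x hxV₁ φ.hom s₁] at hs₀
    obtain ⟨V₂, hxV₂, iV₂V₁, iV₂T, heq⟩ := G.presheaf.germ_eq x hxV₁ (Opens.mem_top x) _ _ hs₀
    -- lift on V₂
    have hlift : ∃ s, φ.hom.app (op V₂) s = G.val.map (homOfLE le_top).op t := by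
      refine ⟨F.val.map iV₂V₁.op s₁, ?_⟩
      rw [← comp_apply, φ.hom.naturality, comp_apply, heq]
      congr 1
    -- shrink to a clopen neighborhood
    obtain ⟨K, hK, hxK, hKV₂⟩ :=
      compact_exists_isClopen_in_isOpen (X := S) (U := V₂.1) V₂.isOpen hxV₂
    refine ⟨⟨K, hK.isOpen⟩, hK, hxK, ?_⟩
    exact aux_restrict_lift φ t (show (⟨K, hK.isOpen⟩ : Opens (TopCat.of S)) ≤ V₂ from hKV₂)
      hlift
  choose C hC mC hlift using loc
  -- Step 2: finite subcover
  obtain ⟨ι, hι⟩ := IsCompact.elim_finite_subcover (isCompact_univ (X := S))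
    (fun x => (C x).1) (fun x => (C x).isOpen)
    (fun x _ => Set.mem_iUnion.2 ⟨x, mC x⟩)
  -- Step 3: induction over the finite subcover
  have key : ∀ ι : Finset S, IsClopen (ι.sup C : Opens (TopCat.of S)).1 ∧
      ∃ s, φ.hom.app (op (ι.sup C)) s = G.val.map (homOfLE le_top).op t := by
    intro ι
    induction ι using Finset.induction with
    | empty =>
        refine ⟨by simp [Finset.sup_empty, isClopen_empty], ⟨0, ?_⟩⟩
        exact aux_sections_subsingleton G Finset.sup_empty _ _
    | @insert a ι ha ih =>
        obtain ⟨hWc, hW⟩ := ih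
        set W : Opens (TopCat.of S) := ι.sup C with hWdef
        have hDopen : IsOpen ((C a).1 \ W.1) := (hC a).isOpen.sdiff hWc.isClosed
        set D : Opens (TopCat.of S) := ⟨(C a).1 \ W.1, hDopen⟩ with hDdef
        have hDCa : D ≤ C a := fun x hx => hx.1
        have hdisj : D ⊓ W = ⊥ := by
          apply Opens.ext
          show (D.1 ∩ W.1) = (∅ : Set (TopCat.of S))
          ext x
          simp only [Set.mem_inter_iff, Set.mem_empty_iff_false, iff_false]
          rintro ⟨⟨-, hxW⟩, hxW'⟩
          exact hxW hxW'
        have hunion : D ⊔ W = C a ⊔ W := by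
          apply Opens.ext
          show (D.1 ∪ W.1) = ((C a).1 ∪ W.1)
          exact Set.diff_union_self
        have hsupins : (insert a ι).sup C = C a ⊔ W := Finset.sup_insert
        have hglue := aux_glue2 φ t D W hdisj
          (aux_restrict_lift φ t hDCa (hlift a)) hW
        rw [hunion] at hglue
        rw [hsupins]
        exact ⟨(hC a).union hWc, hglue⟩
  -- Step 4: conclude
  have htop : (⊤ : Opens (TopCat.of S)) ≤ ι.sup C := by
    intro x _
    obtain ⟨i, hi, hx⟩ := Set.mem_iUnion₂.1 (hι (Set.mem_univ x))
    exact (Finset.le_sup hi : C i ≤ ι.sup C) hx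
  obtain ⟨s, hs⟩ := aux_restrict_lift φ t htop (key ι).2
  refine ⟨s, ?_⟩
  rw [hs, show (homOfLE le_top : (⊤ : Opens (TopCat.of S)) ⟶ ⊤) = 𝟙 _ from rfl,
    op_id, G.val.map_id]
  rfl
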